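/- A graph G has a perfect matching if and only if the 3-uniform hypergraph G', obtained by adding a new vertex ⋆ and replacing each edge {i,j} of G by {i,j,⋆}, has a spanning hypertree. -/

import Mathlib

variable {α : Type*} [DecidableEq α]

/-- Two vertices are adjacent in a hypergraph with hyperedge set `E`
if they are distinct and lie in a common hyperedge. -/
def HypAdj (E : Finset (Finset α)) (u v : α) : Prop :=
  u ≠ v ∧ ∃ e ∈ E, u ∈ e ∧ v ∈ e

/-- A hypergraph with vertex set `V` and hyperedge set `E` is connected if any two
vertices are joined by a path of adjacent vertices. -/
def HypConnected (V : Finset α) (E : Finset (Finset α)) : Prop :=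
  ∀ u ∈ V, ∀ v ∈ V, Relation.ReflTransGen (HypAdj E) u v

/-- A hypergraph has a cycle if there is a cyclic alternating sequence
`v₁, A₁, v₂, A₂, …, v_ℓ, A_ℓ, v_{ℓ+1} = v₁` with `ℓ ≥ 2`, the hyperedges `Aᵢ ∈ E`
pairwise distinct, `vᵢ ≠ vᵢ₊₁`, and `vᵢ, vᵢ₊₁ ∈ Aᵢ` for all `i`. -/
def HypHasCycle (E : Finset (Finset α)) : Prop :=
  ∃ (ℓ : ℕ) (v : Fin (ℓ + 1) → α) (A : Fin ℓ → Finset α),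
    2 ≤ ℓ ∧ v (Fin.last ℓ) = v 0 ∧ Function.Injective A ∧
    ∀ i : Fin ℓ, A i ∈ E ∧ v i.castSucc ≠ v i.succ ∧ v i.castSucc ∈ A i ∧ v i.succ ∈ A i

/-- `(V, E)` is a hypertree: the hyperedges lie inside `V`, and the hypergraph
is connected and has no cycle. -/
def IsHypertree (V : Finset α) (E : Finset (Finset α)) : Prop :=
  (∀ e ∈ E, e ⊆ V) ∧ HypConnected V E ∧ ¬ HypHasCycle E

/-- `E'` is (the hyperedge set of) a spanning hypertree of the hypergraph `(V, E)`. -/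
def IsSpanningHypertree (V : Finset α) (E E' : Finset (Finset α)) : Prop :=
  E' ⊆ E ∧ IsHypertree V E'

open scoped Classical in
/-- The hyperedge set of the 3-uniform hypergraph `G'` obtained from a simple graph `G`
by adding a new vertex `⋆` (here `none : Option V`) and replacing each edge `{i, j}`
by `{i, j, ⋆}`. -/
noncomputable def tripledEdges {V : Type*} [Fintype V] [DecidableEq V]
    (G : SimpleGraph V) : Finset (Finset (Option V)) :=
  Finset.univ.filter (fun s : Finset (Option V) =>
    ∃ i j : V, G.Adj i j ∧ s = {none, some i, some j})

section AuxLemmas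
variable {V : Type*} [Fintype V] [DecidableEq V]

omit [Fintype V] in
lemma triple_swap (a b : V) :
    ({none, some a, some b} : Finset (Option V)) = {none, some b, some a} := by
  rw [Finset.pair_comm (some a) (some b)]

lemma mem_tripledEdges (G : SimpleGraph V) (e : Finset (Option V)) :
    e ∈ tripledEdges G ↔ ∃ i j : V, G.Adj i j ∧ e = {none, some i, some j} := by
  classical
  simp [tripledEdges]

/-- Abstract acyclicity from "any two edges sharing a non-star vertex are equal". -/
lemma no_cycle_of_unique {E' : Finset (Finset (Option V))}
    (huniq : ∀ e1 ∈ E', ∀ e2 ∈ E', ∀ w : V, some w ∈ e1 → some w ∈ e2 → e1 = e2) :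
    ¬ HypHasCycle E' := by
  rintro ⟨ℓ, v, A, hℓ, hc, hinj, hall⟩
  have hnone : ∀ i j : Fin ℓ, i ≠ j → ∀ x, x ∈ A i → x ∈ A j → x = none := by
    intro i j hij x hxi hxj
    cases x with
    | none => rfl
    | some w => exact absurd (hinj (huniq _ (hall i).1 _ (hall j).1 w hxi hxj)) hij
  have hℓ0 : 0 < ℓ := by omega
  have hℓ1 : 1 < ℓ := by omega
  set i0 : Fin ℓ := ⟨0, hℓ0⟩ with hi0
  set i1 : Fin ℓ := ⟨1, hℓ1⟩ with hi1
  set il : Fin ℓ := ⟨ℓ - 1, by omega⟩ with hil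
  have e1 : i0.succ = i1.castSucc := by
    apply Fin.ext; simp [hi0, hi1]
  have e2 : il.succ = Fin.last ℓ := by
    apply Fin.ext; simp [hil, Fin.last]; omega
  have e3 : i0.castSucc = (0 : Fin (ℓ + 1)) := by
    apply Fin.ext; simp [hi0]
  have h1 : v i0.succ = none := by
    refine hnone i0 i1 (Fin.ne_of_val_ne (by simp [hi0, hi1])) _ (hall i0).2.2.2 ?_
    rw [e1]; exact (hall i1).2.2.1
  have h0 : v i0.castSucc = none := by
    refine hnone i0 il (Fin.ne_of_val_ne (by simp [hi0, hil]; omega)) _ (hall i0).2.2.1 ?_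
    rw [e3, ← hc, ← e2]; exact (hall il).2.2.2
  exact (hall i0).2.1 (by rw [h0, h1])

end AuxLemmas

/-- A graph `G` has a perfect matching iff the 3-uniform hypergraph `G'`, obtained by
adding a new vertex `⋆` and replacing each edge `{i, j}` by `{i, j, ⋆}`, has a
spanning hypertree. -/
theorem perfect_matching_iff_spanning_hypertree
    {V : Type*} [Fintype V] [DecidableEq V] (G : SimpleGraph V) :
    (∃ M : G.Subgraph, M.IsPerfectMatching) ↔
      (∃ E' : Finset (Finset (Option V)),
        IsSpanningHypertree Finset.univ (tripledEdges G) E') := by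
  classical
  constructor
  · rintro ⟨M, hMm, hMs⟩
    set E' : Finset (Finset (Option V)) :=
      Finset.univ.filter (fun s : Finset (Option V) =>
        ∃ i j : V, M.Adj i j ∧ s = {none, some i, some j}) with hE'
    have memE' : ∀ e : Finset (Option V),
        e ∈ E' ↔ ∃ i j : V, M.Adj i j ∧ e = {none, some i, some j} := by
      intro e; simp [hE']
    have hform : ∀ e ∈ E', ∀ w : V, some w ∈ e →
        ∃ p, M.Adj w p ∧ e = {none, some w, some p} := by
      intro e he w hw
      obtain ⟨a, b, hab, rfl⟩ := (memE' e).1 he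
      simp only [Finset.mem_insert, Finset.mem_singleton, Option.some.injEq,
        reduceCtorEq, false_or] at hw
      rcases hw with rfl | rfl
      · exact ⟨b, hab, rfl⟩
      · exact ⟨a, hab.symm, triple_swap a w⟩
    have huniq : ∀ e1 ∈ E', ∀ e2 ∈ E', ∀ w : V, some w ∈ e1 → some w ∈ e2 → e1 = e2 := by
      intro e1 he1 e2 he2 w h1 h2
      obtain ⟨p1, hp1, rfl⟩ := hform e1 he1 w h1
      obtain ⟨p2, hp2, rfl⟩ := hform e2 he2 w h2
      have : p1 = p2 := (hMm (hMs w)).unique hp1 hp2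
      rw [this]
    refine ⟨E', ?_, ?_, ?_, no_cycle_of_unique huniq⟩
    · intro e he
      obtain ⟨i, j, hij, rfl⟩ := (memE' e).1 he
      exact (mem_tripledEdges G _).2 ⟨i, j, M.adj_sub hij, rfl⟩
    · intro e _ x _; exact Finset.mem_univ x
    · have hsymm : Symmetric (HypAdj E') := by
        rintro x y ⟨hxy, e, he, hx, hy⟩
        exact ⟨hxy.symm, e, he, hy, hx⟩
      have hto : ∀ u : Option V, Relation.ReflTransGen (HypAdj E') u none := by
        intro u
        cases u with
        | none => exact Relation.ReflTransGen.refl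
        | some w =>
          obtain ⟨p, hp, -⟩ := hMm (hMs w)
          have he : ({none, some w, some p} : Finset (Option V)) ∈ E' :=
            (memE' _).2 ⟨w, p, hp, rfl⟩
          exact Relation.ReflTransGen.single
            ⟨by simp, _, he, by simp, by simp⟩
      intro u _ v _
      exact (hto u).trans ((@Relation.ReflTransGen.symmetric _ _ ⟨fun a b h => hsymm h⟩).symm _ _ (hto v))
  · rintro ⟨E', hsub, hcov, hconn, hnocyc⟩
    have hform : ∀ e ∈ E', ∀ w : V, some w ∈ e →
        ∃ p, G.Adj w p ∧ e = {none, some w, some p} := by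
      intro e he w hw
      obtain ⟨a, b, hab, rfl⟩ := (mem_tripledEdges G e).1 (hsub he)
      simp only [Finset.mem_insert, Finset.mem_singleton, Option.some.injEq,
        reduceCtorEq, false_or] at hw
      rcases hw with rfl | rfl
      · exact ⟨b, hab, rfl⟩
      · exact ⟨a, hab.symm, triple_swap a w⟩
    have huniq : ∀ e1 ∈ E', ∀ e2 ∈ E', ∀ w : V, some w ∈ e1 → some w ∈ e2 → e1 = e2 := by
      intro e1 he1 e2 he2 w h1 h2
      obtain ⟨p1, hp1, rfl⟩ := hform e1 he1 w h1
      obtain ⟨p2, hp2, rfl⟩ := hform e2 he2 w h2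
      by_contra hne
      refine hnocyc ⟨2, ![none, some w, none], ![{none, some w, some p1}, {none, some w, some p2}],
        le_refl 2, rfl, ?_, ?_⟩
      · intro i j hij
        fin_cases i <;> fin_cases j <;> simp_all
      · intro i
        fin_cases i
        · exact ⟨he1, by simp, by simp, by simp⟩
        · exact ⟨he2, by simp, by simp, by simp⟩
    have hadjG : ∀ i j : V, ({none, some i, some j} : Finset (Option V)) ∈ E' → G.Adj i j := by
      intro i j h
      obtain ⟨a, b, hab, heq⟩ := (mem_tripledEdges G _).1 (hsub h)
      have hi : i = a ∨ i = b := by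
        have : some i ∈ ({none, some a, some b} : Finset (Option V)) := by rw [← heq]; simp
        simpa using this
      have hj : j = a ∨ j = b := by
        have : some j ∈ ({none, some a, some b} : Finset (Option V)) := by rw [← heq]; simp
        simpa using this
      have ha2 : a = i ∨ a = j := by
        have : some a ∈ ({none, some i, some j} : Finset (Option V)) := by rw [heq]; simp
        simpa using this
      have hb2 : b = i ∨ b = j := by
        have : some b ∈ ({none, some i, some j} : Finset (Option V)) := by rw [heq]; simp
        simpa using this
      rcases hi with rfl | rfl <;> rcases hj with rfl | rfl
      · rcases hb2 with rfl | rfl <;> exact absurd hab (G.irrefl)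
      · exact hab
      · exact hab.symm
      · rcases ha2 with rfl | rfl <;> exact absurd hab (G.irrefl)
    refine ⟨⟨Set.univ, fun i j => ({none, some i, some j} : Finset (Option V)) ∈ E',
        fun {i j} h => hadjG i j h, fun {i j} _ => Set.mem_univ i,
        ⟨fun i j h => by
          show ({none, some j, some i} : Finset (Option V)) ∈ E'
          rw [triple_swap]; exact h⟩⟩, ?_, fun v => Set.mem_univ v⟩
    intro w _
    have hpath := hconn (some w) (Finset.mem_univ _) none (Finset.mem_univ _)
    rcases Relation.ReflTransGen.cases_head hpath with heq | ⟨c, ⟨hne, e, he, hw, hc⟩, -⟩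
    · exact absurd heq (by simp)
    obtain ⟨p, hadj, rfl⟩ := hform e he w hw
    refine ⟨p, he, ?_⟩
    intro y hy
    have hy' : ({none, some w, some y} : Finset (Option V)) ∈ E' := hy
    have heq2 := huniq _ hy' _ he w (by simp) (by simp)
    have hym : some y ∈ ({none, some w, some p} : Finset (Option V)) := by
      rw [← heq2]; simp
    have : y = w ∨ y = p := by simpa using hym
    rcases this with rfl | rfl
    · exact absurd (hadjG y y hy') (G.irrefl)
    · rfl
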